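/- arXiv:1902.06303 — 9 statements merged into one kernel-verified Lean document; each statement's English description precedes it below -/
import Mathlib

section
/- If an item response model is ordinal according to the paired categories concept (for every pair of categories s < r the ratio π_r(θ)/π_s(θ) is a strictly increasing function of θ), then it is ordinal according to the conditional concept (for every r = 1,…,k the conditional probability P(Y ≥ r | Y ≥ r−1, θ) = (∑_{j=r}^{k} π_j(θ))/(∑_{j=r−1}^{k} π_j(θ)) is a strictly increasing function of θ). -/
/-- If an item response model is ordinal according to the paired
categories concept, then it is ordinal according to the conditional concept. -/
theorem paired_implies_conditional
    (k : ℕ) (p : ℕ → ℝ → ℝ)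
    (hpos : ∀ r, r ≤ k → ∀ θ, 0 < p r θ)
    (hsum : ∀ θ, ∑ r ∈ Finset.range (k + 1), p r θ = 1)
    (hpaired : ∀ s r, s < r → r ≤ k → StrictMono (fun θ => p r θ / p s θ)) :
    ∀ r, 1 ≤ r → r ≤ k →
      StrictMono (fun θ =>
        (∑ j ∈ Finset.Icc r k, p j θ) / (∑ j ∈ Finset.Icc (r - 1) k, p j θ)) := by
  intro r hr1 hrk θ1 θ2 h12
  have hmem : r ∈ Finset.Icc r k := Finset.mem_Icc.mpr ⟨le_refl r, hrk⟩
  have hq : ∀ θ, 0 < p (r - 1) θ := fun θ => hpos _ (le_trans (Nat.sub_le r 1) hrk) θ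
  have hA : ∀ θ, 0 < ∑ j ∈ Finset.Icc r k, p j θ := fun θ =>
    Finset.sum_pos (fun j hj => hpos j (Finset.mem_Icc.mp hj).2 θ) ⟨r, hmem⟩
  have key : (∑ j ∈ Finset.Icc r k, p j θ1) / p (r - 1) θ1
      < (∑ j ∈ Finset.Icc r k, p j θ2) / p (r - 1) θ2 := by
    rw [Finset.sum_div, Finset.sum_div]
    refine Finset.sum_lt_sum_of_nonempty ⟨r, hmem⟩ ?_
    intro j hj
    obtain ⟨hj1, hj2⟩ := Finset.mem_Icc.mp hj
    exact hpaired (r - 1) j (by omega) hj2 h12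
  have hsplit : ∀ θ, ∑ j ∈ Finset.Icc (r - 1) k, p j θ
      = p (r - 1) θ + ∑ j ∈ Finset.Icc r k, p j θ := by
    intro θ
    have hins : Finset.Icc (r - 1) k = insert (r - 1) (Finset.Icc r k) := by
      ext x; simp [Finset.mem_Icc]; omega
    rw [hins, Finset.sum_insert (by simp [Finset.mem_Icc]; omega)]
  have key' : (∑ j ∈ Finset.Icc r k, p j θ1) * p (r - 1) θ2
      < (∑ j ∈ Finset.Icc r k, p j θ2) * p (r - 1) θ1 :=
    (div_lt_div_iff₀ (hq θ1) (hq θ2)).mp key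
  simp only [hsplit]
  rw [div_lt_div_iff₀ (by nlinarith [hA θ1, hq θ1]) (by nlinarith [hA θ2, hq θ2])]
  nlinarith [hA θ1, hA θ2, hq θ1, hq θ2]
end

section
/- If an item response model is ordinal according to the conditional concept (for every r = 1,…,k the conditional probability P(Y ≥ r | Y ≥ r−1, θ) = (∑_{j=r}^{k} π_j(θ))/(∑_{j=r−1}^{k} π_j(θ)) is a strictly increasing function of θ), then it is ordinal according to the split concept (for every r = 1,…,k the cumulative probability P(Y ≥ r | θ) = ∑_{j=r}^{k} π_j(θ) is a strictly increasing function of θ). -/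
/-- If an item response model is ordinal according to the conditional
concept, then it is ordinal according to the split concept. -/
theorem conditional_implies_split
    (k : ℕ) (p : ℕ → ℝ → ℝ)
    (hpos : ∀ r, r ≤ k → ∀ θ, 0 < p r θ)
    (hsum : ∀ θ, ∑ r ∈ Finset.range (k + 1), p r θ = 1)
    (hcond : ∀ r, 1 ≤ r → r ≤ k →
      StrictMono (fun θ =>
        (∑ j ∈ Finset.Icc r k, p j θ) / (∑ j ∈ Finset.Icc (r - 1) k, p j θ))) :
    ∀ r, 1 ≤ r → r ≤ k →
      StrictMono (fun θ => ∑ j ∈ Finset.Icc r k, p j θ) := by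
  have hSpos : ∀ r, r ≤ k → ∀ θ, 0 < ∑ j ∈ Finset.Icc r k, p j θ := by
    intro r hr θ
    apply Finset.sum_pos
    · intro i hi
      exact hpos i (Finset.mem_Icc.mp hi).2 θ
    · exact ⟨r, Finset.mem_Icc.mpr ⟨le_refl r, hr⟩⟩
  have hS0 : ∀ θ, ∑ j ∈ Finset.Icc 0 k, p j θ = 1 := by
    intro θ
    have : Finset.Icc 0 k = Finset.range (k + 1) := by
      ext x; simp [Nat.lt_succ_iff]
    rw [this, hsum]
  intro r hr1 hrk
  induction r with
  | zero => omega
  | succ n ih =>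
    have hratio := hcond (n + 1) (by omega) hrk
    simp only [Nat.add_sub_cancel] at hratio
    rcases Nat.eq_zero_or_pos n with hn | hn
    · subst hn
      have : (fun θ => ∑ j ∈ Finset.Icc 1 k, p j θ)
          = (fun θ => (∑ j ∈ Finset.Icc 1 k, p j θ) / (∑ j ∈ Finset.Icc 0 k, p j θ)) := by
        funext θ; rw [hS0 θ, div_one]
      rw [this]
      exact hratio
    · have hnk : n ≤ k := by omega
      have hSn := ih (by omega) hnk
      intro a b hab
      have h1 : (∑ j ∈ Finset.Icc (n+1) k, p j a) / (∑ j ∈ Finset.Icc n k, p j a)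
          < (∑ j ∈ Finset.Icc (n+1) k, p j b) / (∑ j ∈ Finset.Icc n k, p j b) :=
        hratio hab
      have h2 : (∑ j ∈ Finset.Icc n k, p j a) < (∑ j ∈ Finset.Icc n k, p j b) := hSn hab
      have hpa := hSpos n hnk a
      have hpb := hSpos n hnk b
      have hra : 0 ≤ (∑ j ∈ Finset.Icc (n+1) k, p j a) / (∑ j ∈ Finset.Icc n k, p j a) :=
        le_of_lt (div_pos (hSpos (n+1) hrk a) hpa)
      have key : ((∑ j ∈ Finset.Icc (n+1) k, p j a) / (∑ j ∈ Finset.Icc n k, p j a))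
            * (∑ j ∈ Finset.Icc n k, p j a)
          < ((∑ j ∈ Finset.Icc (n+1) k, p j b) / (∑ j ∈ Finset.Icc n k, p j b))
            * (∑ j ∈ Finset.Icc n k, p j b) :=
        mul_lt_mul'' h1 h2 hra (le_of_lt hpa)
      rw [div_mul_cancel₀ _ (ne_of_gt hpa), div_mul_cancel₀ _ (ne_of_gt hpb)] at key
      exact key
end

section
/- If an item response model is ordinal according to the paired categories concept (for every pair of categories s < r the ratio π_r(θ)/π_s(θ) is a strictly increasing function of θ), then it is ordinal according to the split concept (for every r = 1,…,k the cumulative probability P(Y ≥ r | θ) = ∑_{j=r}^{k} π_j(θ) is a strictly increasing function of θ). -/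
/-- If an item response model is ordinal according to the paired
categories concept, then it is ordinal according to the split concept. -/
theorem paired_implies_split
    (k : ℕ) (p : ℕ → ℝ → ℝ)
    (hpos : ∀ r, r ≤ k → ∀ θ, 0 < p r θ)
    (hsum : ∀ θ, ∑ r ∈ Finset.range (k + 1), p r θ = 1)
    (hpaired : ∀ s r, s < r → r ≤ k → StrictMono (fun θ => p r θ / p s θ)) :
    ∀ r, 1 ≤ r → r ≤ k →
      StrictMono (fun θ => ∑ j ∈ Finset.Icc r k, p j θ) := by
  intro r hr1 hrk θ₁ θ₂ hθ
  set S : ℝ → ℝ := fun θ => ∑ j ∈ Finset.Icc r k, p j θ with hS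
  set T : ℝ → ℝ := fun θ => ∑ i ∈ Finset.range r, p i θ with hT
  have hsplit : ∀ θ, T θ + S θ = 1 := by
    intro θ
    have : T θ + S θ = ∑ j ∈ Finset.range (k + 1), p j θ := by
      simp only [hT, hS, ← Finset.Ico_add_one_right_eq_Icc, Finset.range_eq_Ico]
      exact Finset.sum_Ico_consecutive _ (Nat.zero_le r) (by omega)
    rw [this, hsum]
  -- key cross inequality
  have hkey : S θ₁ * T θ₂ < S θ₂ * T θ₁ := by
    have e1 : S θ₁ * T θ₂ = ∑ j ∈ Finset.Icc r k, ∑ i ∈ Finset.range r, p j θ₁ * p i θ₂ :=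
      Finset.sum_mul_sum _ _ _ _
    have e2 : S θ₂ * T θ₁ = ∑ j ∈ Finset.Icc r k, ∑ i ∈ Finset.range r, p j θ₂ * p i θ₁ :=
      Finset.sum_mul_sum _ _ _ _
    rw [e1, e2]
    apply Finset.sum_lt_sum_of_nonempty
    · exact ⟨r, Finset.mem_Icc.mpr ⟨le_rfl, hrk⟩⟩
    · intro j hj
      apply Finset.sum_lt_sum_of_nonempty
      · exact ⟨0, Finset.mem_range.mpr (by omega)⟩
      · intro i hi
        have hij : i < j := lt_of_lt_of_le (Finset.mem_range.mp hi) (Finset.mem_Icc.mp hj).1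
        have hjk : j ≤ k := (Finset.mem_Icc.mp hj).2
        have hik : i ≤ k := le_trans (le_of_lt hij) hjk
        have h := hpaired i j hij hjk hθ
        simp only at h
        rw [div_lt_div_iff₀ (hpos i hik θ₁) (hpos i hik θ₂)] at h
        linarith [h]
  have h1 := hsplit θ₁
  have h2 := hsplit θ₂
  show S θ₁ < S θ₂
  have hT1 : T θ₁ = 1 - S θ₁ := by linarith
  have hT2 : T θ₂ = 1 - S θ₂ := by linarith
  rw [hT1, hT2] at hkey
  nlinarith [hkey]
end

section
/- The partial credit model is ordinal according to the paired categories concept: for every pair of categories s < r, the ratio π_r(θ)/π_s(θ) is a strictly increasing function of θ; indeed π_r(θ)/π_s(θ) = exp((r−s)θ − (δ_{s+1} + ⋯ + δ_r)). -/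
/-- The partial credit model is ordinal according to the paired
categories concept; indeed π_r(θ)/π_s(θ) = exp((r−s)θ − (δ_{s+1}+⋯+δ_r)). -/
theorem pcm_paired_categories
    (k : ℕ) (δ : ℕ → ℝ) (p : ℕ → ℝ → ℝ)
    (hp : ∀ r, r ≤ k → ∀ θ, p r θ =
      Real.exp (∑ l ∈ Finset.Icc 1 r, (θ - δ l)) /
        ∑ s ∈ Finset.range (k + 1), Real.exp (∑ l ∈ Finset.Icc 1 s, (θ - δ l))) :
    ∀ s r, s < r → r ≤ k →
      StrictMono (fun θ => p r θ / p s θ) ∧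
        ∀ θ, p r θ / p s θ =
          Real.exp (((r : ℝ) - (s : ℝ)) * θ - ∑ l ∈ Finset.Icc (s + 1) r, δ l) := by
  intro s r hsr hrk
  have hsk : s ≤ k := le_trans (le_of_lt hsr) hrk
  have key : ∀ θ, p r θ / p s θ =
      Real.exp (((r : ℝ) - (s : ℝ)) * θ - ∑ l ∈ Finset.Icc (s + 1) r, δ l) := by
    intro θ
    have hD : (0 : ℝ) < ∑ t ∈ Finset.range (k + 1),
        Real.exp (∑ l ∈ Finset.Icc 1 t, (θ - δ l)) := by
      apply Finset.sum_pos (fun t _ => Real.exp_pos _)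
      exact ⟨0, Finset.mem_range.mpr (Nat.succ_pos k)⟩
    rw [hp r hrk θ, hp s hsk θ, div_div_div_cancel_right₀ hD.ne']
    rw [← Real.exp_sub]
    congr 1
    have h1 : ∀ m : ℕ, Finset.Icc 1 m = Finset.Ioc 0 m := by
      intro m; rw [← Finset.Icc_add_one_left_eq_Ioc, zero_add]
    rw [h1 r, h1 s]
    have hsplit : ∑ l ∈ Finset.Ioc 0 s, (θ - δ l) + ∑ l ∈ Finset.Ioc s r, (θ - δ l)
        = ∑ l ∈ Finset.Ioc 0 r, (θ - δ l) :=
      Finset.sum_Ioc_consecutive _ (Nat.zero_le s) (le_of_lt hsr)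
    have : ∑ l ∈ Finset.Ioc 0 r, (θ - δ l) - ∑ l ∈ Finset.Ioc 0 s, (θ - δ l)
        = ∑ l ∈ Finset.Ioc s r, (θ - δ l) := by linarith
    rw [this]
    rw [Finset.sum_sub_distrib, Finset.sum_const, Nat.card_Ioc, nsmul_eq_mul,
      Nat.cast_sub (le_of_lt hsr), Finset.Icc_add_one_left_eq_Ioc]
  refine ⟨?_, key⟩
  intro a b hab
  simp only [key]
  apply Real.exp_lt_exp.mpr
  have hc : (0 : ℝ) < (r : ℝ) - (s : ℝ) := by
    have := hsr
    push_cast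
    exact sub_pos.mpr (by exact_mod_cast hsr)
  nlinarith
end

section
/- The logistic cumulative model (graded response model with logistic link) is ordinal according to the paired categories concept: for every pair of categories s < r, the ratio π_r(θ)/π_s(θ) is a strictly increasing function of θ. -/
lemma aux_pos (x : ℝ) : (0:ℝ) < 1 + Real.exp x := by positivity

/-- θ ↦ eᶿ / (1 + e^{θ-a}) is strictly increasing. -/
lemma expDivSM (a : ℝ) : StrictMono (fun θ : ℝ => Real.exp θ / (1 + Real.exp (θ - a))) := by
  intro x y hxy
  have hx := aux_pos (x - a)
  have hy := aux_pos (y - a)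
  simp only
  rw [div_lt_div_iff₀ hx hy]
  have h1 : Real.exp (x - a) * Real.exp a = Real.exp x := by
    rw [← Real.exp_add]; ring_nf
  have h2 : Real.exp (y - a) * Real.exp a = Real.exp y := by
    rw [← Real.exp_add]; ring_nf
  have h3 : Real.exp x < Real.exp y := Real.exp_lt_exp.mpr hxy
  nlinarith [Real.exp_pos a, Real.exp_pos x, Real.exp_pos y,
    Real.exp_pos (x - a), Real.exp_pos (y - a)]

/-- θ ↦ (1 + e^{θ-a}) / (1 + e^{θ-b}) is monotone when a ≤ b. -/
lemma ratioMono {a b : ℝ} (hab : a ≤ b) :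
    Monotone (fun θ : ℝ => (1 + Real.exp (θ - a)) / (1 + Real.exp (θ - b))) := by
  intro x y hxy
  have hx := aux_pos (x - b)
  have hy := aux_pos (y - b)
  simp only
  rw [div_le_div_iff₀ hx hy]
  have h1 : Real.exp (x - a) = Real.exp x * Real.exp (-a) := by
    rw [← Real.exp_add]; ring_nf
  have h2 : Real.exp (y - a) = Real.exp y * Real.exp (-a) := by
    rw [← Real.exp_add]; ring_nf
  have h3 : Real.exp (x - b) = Real.exp x * Real.exp (-b) := by
    rw [← Real.exp_add]; ring_nf
  have h4 : Real.exp (y - b) = Real.exp y * Real.exp (-b) := by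
    rw [← Real.exp_add]; ring_nf
  have h5 : Real.exp x ≤ Real.exp y := Real.exp_le_exp.mpr hxy
  have h6 : Real.exp (-b) ≤ Real.exp (-a) := Real.exp_le_exp.mpr (by linarith)
  rw [h1, h2, h3, h4]
  nlinarith [Real.exp_pos x, Real.exp_pos y, Real.exp_pos (-a), Real.exp_pos (-b),
    mul_nonneg (sub_nonneg.2 h5) (sub_nonneg.2 h6)]

/-- θ ↦ (1 + e^{θ-a}) / (1 + e^{θ-b}) is strictly increasing when a < b. -/
lemma ratioSM {a b : ℝ} (hab : a < b) :
    StrictMono (fun θ : ℝ => (1 + Real.exp (θ - a)) / (1 + Real.exp (θ - b))) := by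
  intro x y hxy
  have hx := aux_pos (x - b)
  have hy := aux_pos (y - b)
  simp only
  rw [div_lt_div_iff₀ hx hy]
  have h1 : Real.exp (x - a) = Real.exp x * Real.exp (-a) := by
    rw [← Real.exp_add]; ring_nf
  have h2 : Real.exp (y - a) = Real.exp y * Real.exp (-a) := by
    rw [← Real.exp_add]; ring_nf
  have h3 : Real.exp (x - b) = Real.exp x * Real.exp (-b) := by
    rw [← Real.exp_add]; ring_nf
  have h4 : Real.exp (y - b) = Real.exp y * Real.exp (-b) := by
    rw [← Real.exp_add]; ring_nf
  have h5 : Real.exp x < Real.exp y := Real.exp_lt_exp.mpr hxy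
  have h6 : Real.exp (-b) < Real.exp (-a) := Real.exp_lt_exp.mpr (by linarith)
  rw [h1, h2, h3, h4]
  nlinarith [Real.exp_pos x, Real.exp_pos y, Real.exp_pos (-a), Real.exp_pos (-b),
    mul_pos (sub_pos.2 h5) (sub_pos.2 h6)]

lemma onePlusSM (a : ℝ) : StrictMono (fun θ : ℝ => 1 + Real.exp (θ - a)) := by
  intro x y hxy
  simp only
  have : Real.exp (x - a) < Real.exp (y - a) := Real.exp_lt_exp.mpr (by linarith)
  linarith

lemma smMulMono {f g : ℝ → ℝ} (hf : StrictMono f) (hg : Monotone g)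
    (hf0 : ∀ x, 0 < f x) (hg0 : ∀ x, 0 < g x) :
    StrictMono fun x => f x * g x := fun a b h =>
  mul_lt_mul (hf h) (hg h.le) (hg0 a) (hf0 b).le

lemma constMulSM {c : ℝ} (hc : 0 < c) {f : ℝ → ℝ} (hf : StrictMono f) :
    StrictMono fun x => c * f x := fun a b h => mul_lt_mul_of_pos_left (hf h) hc

/-- The logistic cumulative (graded response) model is ordinal
according to the paired categories concept. -/
theorem logistic_cumulative_paired_categories
    (k : ℕ) (hk : 1 ≤ k) (δ : ℕ → ℝ)
    (hδ : ∀ i j, 1 ≤ i → i < j → j ≤ k → δ i < δ j)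
    (p : ℕ → ℝ → ℝ)
    (hp0 : ∀ θ, p 0 θ = 1 - Real.exp (θ - δ 1) / (1 + Real.exp (θ - δ 1)))
    (hpr : ∀ r, 1 ≤ r → r < k → ∀ θ,
      p r θ = Real.exp (θ - δ r) / (1 + Real.exp (θ - δ r)) -
        Real.exp (θ - δ (r + 1)) / (1 + Real.exp (θ - δ (r + 1))))
    (hpk : ∀ θ, p k θ = Real.exp (θ - δ k) / (1 + Real.exp (θ - δ k))) :
    ∀ s r, s < r → r ≤ k → StrictMono (fun θ => p r θ / p s θ) := by
  -- basic facts
  have hEx : ∀ (θ a : ℝ), Real.exp (θ - a) = Real.exp θ * Real.exp (-a) := by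
    intro θ a; rw [← Real.exp_add]; ring_nf
  have hDpos : ∀ (θ a : ℝ), (0:ℝ) < 1 + Real.exp (θ - a) := fun θ a => aux_pos _
  -- closed forms
  have hp0' : ∀ θ, p 0 θ = 1 / (1 + Real.exp (θ - δ 1)) := by
    intro θ
    have h := hDpos θ (δ 1)
    rw [hp0]; field_simp; ring
  have hpr' : ∀ j, 1 ≤ j → j < k → ∀ θ, p j θ =
      (Real.exp (-δ j) - Real.exp (-δ (j+1))) *
        (Real.exp θ / ((1 + Real.exp (θ - δ j)) * (1 + Real.exp (θ - δ (j+1))))) := by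
    intro j hj1 hjk θ
    have h1 := hDpos θ (δ j)
    have h2 := hDpos θ (δ (j+1))
    rw [hpr j hj1 hjk, hEx θ (δ j), hEx θ (δ (j+1))] at *
    field_simp
    ring
  have hpk' : ∀ θ, p k θ =
      Real.exp (-δ k) * (Real.exp θ / (1 + Real.exp (θ - δ k))) := by
    intro θ
    have h1 := hDpos θ (δ k)
    rw [hpk, hEx θ (δ k)] at *
    field_simp
  -- positive difference constants
  have hc : ∀ j, 1 ≤ j → j < k → (0:ℝ) < Real.exp (-δ j) - Real.exp (-δ (j+1)) := by
    intro j hj1 hjk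
    have : δ j < δ (j+1) := hδ j (j+1) hj1 (Nat.lt_succ_self j) hjk
    have := Real.exp_lt_exp.mpr (neg_lt_neg this)
    linarith
  intro s r hsr hrk
  rcases Nat.eq_zero_or_pos s with hs0 | hs1
  · subst hs0
    have hr1 : 1 ≤ r := hsr
    rcases eq_or_lt_of_le hrk with hreq | hrlt
    · -- s = 0, r = k
      subst hreq
      have heq : (fun θ => p r θ / p 0 θ) = fun θ =>
          Real.exp (-δ r) *
            ((Real.exp θ / (1 + Real.exp (θ - δ r))) * (1 + Real.exp (θ - δ 1))) := by
        funext θ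
        rw [hpk', hp0']
        have h1 := (hDpos θ (δ r)).ne'
        have h2 := (hDpos θ (δ 1)).ne'
        field_simp
      rw [heq]
      exact constMulSM (Real.exp_pos _)
        (smMulMono (expDivSM _) (onePlusSM _).monotone
          (fun x => div_pos (Real.exp_pos _) (hDpos _ _)) (fun x => hDpos _ _))
    · -- s = 0, 1 ≤ r < k
      have hδ1r : δ 1 ≤ δ r := by
        rcases eq_or_lt_of_le hr1 with h | h
        · rw [← h]
        · exact (hδ 1 r le_rfl h (le_of_lt hrlt)).le
      have heq : (fun θ => p r θ / p 0 θ) = fun θ =>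
          (Real.exp (-δ r) - Real.exp (-δ (r+1))) *
            ((Real.exp θ / (1 + Real.exp (θ - δ (r+1)))) *
              ((1 + Real.exp (θ - δ 1)) / (1 + Real.exp (θ - δ r)))) := by
        funext θ
        rw [hpr' r hr1 hrlt, hp0']
        have h1 := (hDpos θ (δ r)).ne'
        have h2 := (hDpos θ (δ (r+1))).ne'
        have h3 := (hDpos θ (δ 1)).ne'
        field_simp
      rw [heq]
      exact constMulSM (hc r hr1 hrlt)
        (smMulMono (expDivSM _) (ratioMono hδ1r)
          (fun x => div_pos (Real.exp_pos _) (hDpos _ _))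
          (fun x => div_pos (hDpos _ _) (hDpos _ _)))
  · -- 1 ≤ s
    have hslt : s < k := lt_of_lt_of_le hsr hrk
    have hcs := hc s hs1 hslt
    rcases eq_or_lt_of_le hrk with hreq | hrlt
    · -- 1 ≤ s < r = k
      subst hreq
      have hδsk : δ (s+1) ≤ δ r := by
        rcases eq_or_lt_of_le (Nat.succ_le_of_lt hsr) with h | h
        · exact (congrArg δ h).le
        · exact (hδ (s+1) r (Nat.le_add_left 1 s) h le_rfl).le
      have heq : (fun θ => p r θ / p s θ) = fun θ =>
          (Real.exp (-δ r) / (Real.exp (-δ s) - Real.exp (-δ (s+1)))) *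
            ((1 + Real.exp (θ - δ s)) *
              ((1 + Real.exp (θ - δ (s+1))) / (1 + Real.exp (θ - δ r)))) := by
        funext θ
        rw [hpk', hpr' s hs1 hslt]
        have h1 := (hDpos θ (δ s)).ne'
        have h2 := (hDpos θ (δ (s+1))).ne'
        have h3 := (hDpos θ (δ r)).ne'
        have h4 := hcs.ne'
        have h5 := (Real.exp_pos θ).ne'
        field_simp
      rw [heq]
      exact constMulSM (div_pos (Real.exp_pos _) hcs)
        (smMulMono (onePlusSM _) (ratioMono hδsk)
          (fun x => hDpos _ _) (fun x => div_pos (hDpos _ _) (hDpos _ _)))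
    · -- 1 ≤ s < r < k
      have hcr := hc r (le_of_lt (lt_of_le_of_lt hs1 hsr)) hrlt
      have hδsr : δ s < δ r := hδ s r hs1 hsr (le_of_lt hrlt)
      have hδs1r1 : δ (s+1) < δ (r+1) := hδ (s+1) (r+1) (Nat.le_add_left 1 s)
        (Nat.succ_lt_succ hsr) hrlt
      have heq : (fun θ => p r θ / p s θ) = fun θ =>
          ((Real.exp (-δ r) - Real.exp (-δ (r+1))) /
              (Real.exp (-δ s) - Real.exp (-δ (s+1)))) *
            (((1 + Real.exp (θ - δ s)) / (1 + Real.exp (θ - δ r))) *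
              ((1 + Real.exp (θ - δ (s+1))) / (1 + Real.exp (θ - δ (r+1))))) := by
        funext θ
        rw [hpr' r (le_of_lt (lt_of_le_of_lt hs1 hsr)) hrlt, hpr' s hs1 hslt]
        have h1 := (hDpos θ (δ s)).ne'
        have h2 := (hDpos θ (δ (s+1))).ne'
        have h3 := (hDpos θ (δ r)).ne'
        have h4 := (hDpos θ (δ (r+1))).ne'
        have h5 := hcs.ne'
        have h6 := (Real.exp_pos θ).ne'
        field_simp
      rw [heq]
      exact constMulSM (div_pos hcr hcs)
        (smMulMono (ratioSM hδsr) (ratioMono hδs1r1.le)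
          (fun x => div_pos (hDpos _ _) (hDpos _ _))
          (fun x => div_pos (hDpos _ _) (hDpos _ _)))
end

section
/- The logistic sequential model is ordinal according to the paired categories concept: for every pair of categories s < r, the ratio π_r(θ)/π_s(θ) is a strictly increasing function of θ. -/
private lemma sig_pos (x : ℝ) : 0 < Real.exp x / (1 + Real.exp x) := by positivity

private lemma sig_le {x y : ℝ} (h : x ≤ y) :
    Real.exp x / (1 + Real.exp x) ≤ Real.exp y / (1 + Real.exp y) := by
  rw [div_le_div_iff₀ (by positivity) (by positivity)]
  have := Real.exp_le_exp.2 h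
  nlinarith [Real.exp_pos x, Real.exp_pos y]

private lemma one_sub_sig (x : ℝ) :
    1 - Real.exp x / (1 + Real.exp x) = 1 / (1 + Real.exp x) := by
  have : (1 : ℝ) + Real.exp x ≠ 0 := by positivity
  field_simp
  ring

private lemma strict_factor {a b θ₁ θ₂ : ℝ} (h : θ₁ < θ₂) :
    Real.exp (θ₁ - a) / (1 + Real.exp (θ₁ - b)) <
      Real.exp (θ₂ - a) / (1 + Real.exp (θ₂ - b)) := by
  rw [div_lt_div_iff₀ (by positivity) (by positivity)]
  have key : Real.exp (θ₁ - a) * Real.exp (θ₂ - b) =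
      Real.exp (θ₂ - a) * Real.exp (θ₁ - b) := by
    rw [← Real.exp_add, ← Real.exp_add]; ring_nf
  have h1 : Real.exp (θ₁ - a) < Real.exp (θ₂ - a) :=
    Real.exp_lt_exp.2 (by linarith)
  nlinarith [Real.exp_pos (θ₁ - a), Real.exp_pos (θ₂ - b)]

private lemma strict_mono_mul {A B : ℝ → ℝ} (hA : StrictMono A)
    (hB : Monotone B) (hApos : ∀ θ, 0 < A θ) (hBpos : ∀ θ, 0 < B θ) :
    StrictMono (fun θ => A θ * B θ) := by
  intro θ₁ θ₂ h
  exact mul_lt_mul (hA h) (hB h.le) (hBpos θ₁) (hApos θ₂).le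

/-- The logistic sequential model is ordinal according to the paired
categories concept. -/
theorem logistic_sequential_paired_categories
    (k : ℕ) (δ : ℕ → ℝ) (p : ℕ → ℝ → ℝ)
    (hpr : ∀ r, r < k → ∀ θ,
      p r θ = (∏ l ∈ Finset.Icc 1 r, Real.exp (θ - δ l) / (1 + Real.exp (θ - δ l))) *
        (1 - Real.exp (θ - δ (r + 1)) / (1 + Real.exp (θ - δ (r + 1)))))
    (hpk : ∀ θ, p k θ = ∏ l ∈ Finset.Icc 1 k, Real.exp (θ - δ l) / (1 + Real.exp (θ - δ l))) :
    ∀ s r, s < r → r ≤ k → StrictMono (fun θ => p r θ / p s θ) := by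
  intro s r hsr hrk
  set σ : ℕ → ℝ → ℝ := fun l θ => Real.exp (θ - δ l) / (1 + Real.exp (θ - δ l)) with hσ
  have hsk : s < k := lt_of_lt_of_le hsr hrk
  -- product splitting
  have hsplit : ∀ θ, (∏ l ∈ Finset.Icc 1 r, σ l θ) =
      (∏ l ∈ Finset.Icc 1 s, σ l θ) * (σ (s+1) θ * ∏ l ∈ Finset.Ioc (s+1) r, σ l θ) := by
    intro θ
    have h1 : Finset.Icc 1 r = Finset.Ioc 0 r := Finset.Icc_add_one_left_eq_Ioc 0 r
    have h2 : Finset.Icc 1 s = Finset.Ioc 0 s := Finset.Icc_add_one_left_eq_Ioc 0 s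
    rw [h1, h2, ← Finset.prod_Ioc_consecutive (fun l => σ l θ) (Nat.zero_le s) hsr.le,
      ← Finset.prod_Ioc_consecutive (fun l => σ l θ) (Nat.le_succ s) hsr,
      Nat.Ioc_succ_singleton, Finset.prod_singleton]
  -- positivity and monotonicity of the tail product
  have hQpos : ∀ θ, 0 < ∏ l ∈ Finset.Ioc (s+1) r, σ l θ := by
    intro θ; exact Finset.prod_pos fun l _ => sig_pos _
  have hQmono : Monotone (fun θ => ∏ l ∈ Finset.Ioc (s+1) r, σ l θ) := by
    intro θ₁ θ₂ h
    exact Finset.prod_le_prod (fun l _ => (sig_pos _).le)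
      (fun l _ => sig_le (by linarith))
  have hPs : ∀ θ, 0 < ∏ l ∈ Finset.Icc 1 s, σ l θ := by
    intro θ; exact Finset.prod_pos fun l _ => sig_pos _
  rcases eq_or_lt_of_le hrk with hreq | hrlt
  · -- r = k
    subst hreq
    have heq : (fun θ => p r θ / p s θ) =
        fun θ => Real.exp (θ - δ (s+1)) * ∏ l ∈ Finset.Ioc (s+1) r, σ l θ := by
      funext θ
      rw [hpk θ, hpr s hsk θ]
      show (∏ l ∈ Finset.Icc 1 r, σ l θ) /
          ((∏ l ∈ Finset.Icc 1 s, σ l θ) * (1 - σ (s+1) θ)) = _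
      rw [hsplit θ, hσ]
      simp only []
      rw [one_sub_sig]
      have e1 : (0:ℝ) < 1 + Real.exp (θ - δ (s+1)) := by positivity
      have e2 := (hPs θ).ne'
      field_simp
    rw [heq]
    exact strict_mono_mul (fun θ₁ θ₂ h => Real.exp_lt_exp.2 (by linarith))
      hQmono (fun θ => Real.exp_pos _) hQpos
  · -- r < k
    have heq : (fun θ => p r θ / p s θ) =
        fun θ => (Real.exp (θ - δ (s+1)) / (1 + Real.exp (θ - δ (r+1)))) *
          ∏ l ∈ Finset.Ioc (s+1) r, σ l θ := by
      funext θ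
      rw [hpr r hrlt θ, hpr s hsk θ]
      show (∏ l ∈ Finset.Icc 1 r, σ l θ) * (1 - σ (r+1) θ) /
          ((∏ l ∈ Finset.Icc 1 s, σ l θ) * (1 - σ (s+1) θ)) = _
      rw [hsplit θ, hσ]
      simp only []
      rw [one_sub_sig, one_sub_sig]
      have e1 : (0:ℝ) < 1 + Real.exp (θ - δ (s+1)) := by positivity
      have e2 : (0:ℝ) < 1 + Real.exp (θ - δ (r+1)) := by positivity
      have e3 := (hPs θ).ne'
      field_simp
    rw [heq]
    exact strict_mono_mul (fun θ₁ θ₂ h => strict_factor h)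
      hQmono (fun θ => div_pos (Real.exp_pos _) (by positivity)) hQpos
end

section
/- The general adjacent categories model is ordinal according to the paired categories concept: if for every r = 1,…,k the conditional probability π_r(θ)/(π_{r−1}(θ)+π_r(θ)) equals F(θ − δ_r) for a strictly increasing distribution function F : ℝ → (0,1), then for every pair of categories s < r the ratio π_r(θ)/π_s(θ) is a strictly increasing function of θ. -/
/-- The general adjacent categories model is ordinal according to the
paired categories concept. -/
theorem adjacent_categories_paired
    (k : ℕ) (p : ℕ → ℝ → ℝ) (δ : ℕ → ℝ) (F : ℝ → ℝ)
    (hpos : ∀ r, r ≤ k → ∀ θ, 0 < p r θ)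
    (hsum : ∀ θ, ∑ r ∈ Finset.range (k + 1), p r θ = 1)
    (hFmono : StrictMono F)
    (hFrange : ∀ x, F x ∈ Set.Ioo (0 : ℝ) 1)
    (hmodel : ∀ r, 1 ≤ r → r ≤ k → ∀ θ,
      p r θ / (p (r - 1) θ + p r θ) = F (θ - δ r)) :
    ∀ s r, s < r → r ≤ k → StrictMono (fun θ => p r θ / p s θ) := by
  -- adjacent ratio formula
  have hratio : ∀ r, 1 ≤ r → r ≤ k → ∀ θ,
      p r θ / p (r - 1) θ = F (θ - δ r) / (1 - F (θ - δ r)) := by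
    intro r h1 hk θ
    have ha : 0 < p (r - 1) θ := hpos _ (le_trans (Nat.sub_le r 1) hk) θ
    have hb : 0 < p r θ := hpos _ hk θ
    have hF := hmodel r h1 hk θ
    obtain ⟨hF0, hF1⟩ := hFrange (θ - δ r)
    have hab : 0 < p (r - 1) θ + p r θ := by linarith
    have key : p r θ = F (θ - δ r) * (p (r - 1) θ + p r θ) := by
      field_simp at hF; linarith [hF]
    rw [div_eq_div_iff ha.ne' (by linarith : (0:ℝ) < 1 - F (θ - δ r)).ne']
    nlinarith [key]
  have hadj : ∀ r, 1 ≤ r → r ≤ k → StrictMono (fun θ => p r θ / p (r - 1) θ) := by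
    intro r h1 hk θ1 θ2 hlt
    simp only
    rw [hratio r h1 hk θ1, hratio r h1 hk θ2]
    have hF1 := hFrange (θ1 - δ r)
    have hF2 := hFrange (θ2 - δ r)
    obtain ⟨a0, a1⟩ := hF1
    obtain ⟨b0, b1⟩ := hF2
    have hab : F (θ1 - δ r) < F (θ2 - δ r) := hFmono (by linarith)
    rw [div_lt_div_iff₀ (by linarith) (by linarith)]
    nlinarith
  intro s r hsr hrk
  induction r with
  | zero => omega
  | succ n ih =>
    have hn1 : 1 ≤ n + 1 := Nat.le_add_left 1 n
    have hadj' := hadj (n + 1) hn1 hrk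
    simp only [Nat.add_sub_cancel] at hadj'
    rcases Nat.lt_or_ge s n with h | h
    · -- s < n : compose
      have ihn := ih h (by omega)
      intro θ1 θ2 hlt
      have e : ∀ θ, p (n + 1) θ / p s θ = (p (n + 1) θ / p n θ) * (p n θ / p s θ) := by
        intro θ
        rw [div_mul_div_comm]
        rw [mul_comm (p n θ) (p s θ), mul_div_mul_right _ _ (hpos n (by omega) θ).ne']
      simp only [e]
      have h1 := hadj' hlt
      have h2 := ihn hlt
      have pos1 : 0 < p (n + 1) θ1 / p n θ1 :=
        div_pos (hpos _ hrk θ1) (hpos n (by omega) θ1)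
      have pos2 : 0 < p n θ1 / p s θ1 :=
        div_pos (hpos n (by omega) θ1) (hpos s (by omega) θ1)
      simp only at h1 h2
      nlinarith
    · -- s = n
      have : s = n := by omega
      subst this
      exact hadj'
end

section
/- In the four-category IR-tree model with category probabilities π_0 = (1 − F(θ − δ⁽¹⁾))(1 − F(θ⁽²⁾ − δ⁽²⁾)), π_1 = (1 − F(θ − δ⁽¹⁾))F(θ⁽²⁾ − δ⁽²⁾), π_2 = F(θ − δ⁽¹⁾)(1 − F(θ⁽³⁾ − δ⁽³⁾)), π_3 = F(θ − δ⁽¹⁾)F(θ⁽³⁾ − δ⁽³⁾), the ratio π_1/π_0 = F(θ⁽²⁾ − δ⁽²⁾)/(1 − F(θ⁽²⁾ − δ⁽²⁾)) does not depend on θ; in particular, for fixed θ⁽²⁾, θ⁽³⁾ the map θ ↦ π_1/π_0 is constant and hence not strictly increasing, so the model is not ordinal in the trait θ according to the paired categories concept. -/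
/-- In the four-category IR-tree model the ratio π_1/π_0 does not
depend on θ; in particular it is constant in θ and hence not strictly increasing,
so the model is not ordinal in θ according to the paired categories concept. -/
theorem irtree_not_ordinal
    (F : ℝ → ℝ)
    (hFmono : StrictMono F)
    (hFrange : ∀ x, F x ∈ Set.Ioo (0 : ℝ) 1)
    (θ2 θ3 δ1 δ2 δ3 : ℝ) (p : ℕ → ℝ → ℝ)
    (hp0 : ∀ θ, p 0 θ = (1 - F (θ - δ1)) * (1 - F (θ2 - δ2)))
    (hp1 : ∀ θ, p 1 θ = (1 - F (θ - δ1)) * F (θ2 - δ2))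
    (hp2 : ∀ θ, p 2 θ = F (θ - δ1) * (1 - F (θ3 - δ3)))
    (hp3 : ∀ θ, p 3 θ = F (θ - δ1) * F (θ3 - δ3)) :
    (∀ θ, p 1 θ / p 0 θ = F (θ2 - δ2) / (1 - F (θ2 - δ2))) ∧
      ¬ StrictMono (fun θ => p 1 θ / p 0 θ) := by
  have hconst : ∀ θ, p 1 θ / p 0 θ = F (θ2 - δ2) / (1 - F (θ2 - δ2)) := by
    intro θ
    have h1 : F (θ - δ1) < 1 := (hFrange _).2
    have hne : 1 - F (θ - δ1) ≠ 0 := by linarith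
    rw [hp0, hp1, mul_div_mul_left _ _ hne]
  refine ⟨hconst, fun h => ?_⟩
  have := h (show (0:ℝ) < 1 by norm_num)
  simp only [hconst] at this
  exact lt_irrefl _ this
end

section
/- The partial credit model with response style (PCMRS) with k = 4 categories 0,…,4 and middle category m = 2 is not ordinal in the response-style dimension θ₂: for fixed θ₁, the ratio π_1(θ₁, θ₂)/π_0(θ₁, θ₂) = exp(θ₁ + 1.5θ₂ − δ_1) is a strictly increasing function of θ₂, while the ratio π_4(θ₁, θ₂)/π_3(θ₁, θ₂) = exp(θ₁ − 1.5θ₂ − δ_4) is a strictly decreasing function of θ₂. -/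
/-- The PCMRS with k = 4 and middle category m = 2 is not ordinal in
the response-style dimension θ₂: π_1/π_0 = exp(θ₁ + 1.5θ₂ − δ_1) is strictly
increasing in θ₂ while π_4/π_3 = exp(θ₁ − 1.5θ₂ − δ_4) is strictly decreasing. -/
theorem pcmrs_not_ordinal_in_second_dimension
    (δ : ℕ → ℝ) (p : ℕ → ℝ → ℝ → ℝ)
    (hp : ∀ r, r ≤ 4 → ∀ θ1 θ2 : ℝ, p r θ1 θ2 =
      Real.exp (∑ l ∈ Finset.Icc 1 r, (θ1 + ((2 : ℝ) - (l : ℝ) + 0.5) * θ2 - δ l)) /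
        ∑ s ∈ Finset.range 5,
          Real.exp (∑ l ∈ Finset.Icc 1 s, (θ1 + ((2 : ℝ) - (l : ℝ) + 0.5) * θ2 - δ l))) :
    ∀ θ1 : ℝ,
      (∀ θ2 : ℝ, p 1 θ1 θ2 / p 0 θ1 θ2 = Real.exp (θ1 + 1.5 * θ2 - δ 1)) ∧
      StrictMono (fun θ2 => p 1 θ1 θ2 / p 0 θ1 θ2) ∧
      (∀ θ2 : ℝ, p 4 θ1 θ2 / p 3 θ1 θ2 = Real.exp (θ1 - 1.5 * θ2 - δ 4)) ∧
      StrictAnti (fun θ2 => p 4 θ1 θ2 / p 3 θ1 θ2) := by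
  intro θ1
  have hD : ∀ θ2 : ℝ, (0 : ℝ) <
      ∑ s ∈ Finset.range 5,
        Real.exp (∑ l ∈ Finset.Icc 1 s, (θ1 + ((2 : ℝ) - (l : ℝ) + 0.5) * θ2 - δ l)) := by
    intro θ2
    exact Finset.sum_pos (fun s _ => Real.exp_pos _) ⟨0, by simp⟩
  have key : ∀ r s : ℕ, r ≤ 4 → s ≤ 4 → ∀ θ2 : ℝ,
      p r θ1 θ2 / p s θ1 θ2 =
      Real.exp ((∑ l ∈ Finset.Icc 1 r, (θ1 + ((2 : ℝ) - (l : ℝ) + 0.5) * θ2 - δ l))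
        - ∑ l ∈ Finset.Icc 1 s, (θ1 + ((2 : ℝ) - (l : ℝ) + 0.5) * θ2 - δ l)) := by
    intro r s hr hs θ2
    rw [hp r hr θ1 θ2, hp s hs θ1 θ2, Real.exp_sub]
    have := (hD θ2).ne'
    field_simp
    exact congrArg Real.exp (Finset.sum_congr rfl fun x _ => by ring)
  have h10 : ∀ θ2 : ℝ, p 1 θ1 θ2 / p 0 θ1 θ2 = Real.exp (θ1 + 1.5 * θ2 - δ 1) := by
    intro θ2
    rw [key 1 0 (by norm_num) (by norm_num) θ2]
    rw [show Finset.Icc 1 1 = {1} by decide, show Finset.Icc 1 0 = ∅ by decide]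
    norm_num
  have h43 : ∀ θ2 : ℝ, p 4 θ1 θ2 / p 3 θ1 θ2 = Real.exp (θ1 - 1.5 * θ2 - δ 4) := by
    intro θ2
    rw [key 4 3 (by norm_num) (by norm_num) θ2]
    congr 1
    rw [show Finset.Icc 1 4 = insert 4 (Finset.Icc 1 3) by decide]
    rw [Finset.sum_insert (by decide)]
    push_cast
    ring
  refine ⟨h10, ?_, h43, ?_⟩
  · have : StrictMono (fun θ2 : ℝ => Real.exp (θ1 + 1.5 * θ2 - δ 1)) := by
      intro a b hab
      exact Real.exp_lt_exp.mpr (by nlinarith)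
    exact fun a b hab => by simpa [h10] using this hab
  · have : StrictAnti (fun θ2 : ℝ => Real.exp (θ1 - 1.5 * θ2 - δ 4)) := by
      intro a b hab
      exact Real.exp_lt_exp.mpr (by nlinarith)
    exact fun a b hab => by simpa [h43] using this hab
end
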